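/- Let n be a positive integer, K a nonzero n×n real symmetric positive semidefinite matrix, λ > 0, y ∈ ℝⁿ, z ∈ ℝⁿ a vector, and p ≥ 0. Define l = p · zᵀ (K + nλI)⁻¹ z, L = (p/(n²λ)) zᵀ (y yᵀ + n I) z, D = (1/(n²λ)) Tr[(y yᵀ + n I) K] (noting D > 0), and the surrogate leverage score q = L / D. Then l ≤ D · q; that is, the ratio of the true ridge leverage function to the surrogate leverage score distribution is bounded by D everywhere. -/

import Mathlib

open Matrix

lemma psd_quad_nonneg {n : ℕ} {K : Matrix (Fin n) (Fin n) ℝ} (hK : K.PosSemidef)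
    (x : Fin n → ℝ) : 0 ≤ x ⬝ᵥ (K *ᵥ x) := by
  have := hK.dotProduct_mulVec_nonneg x
  simpa using this

lemma psd_trace_pos {n : ℕ} {K : Matrix (Fin n) (Fin n) ℝ} (hK : K.PosSemidef)
    (hKne : K ≠ 0) : 0 < Matrix.trace K := by
  have hdiag : ∀ i, 0 ≤ K i i := fun i => by
    have := psd_quad_nonneg hK (Pi.single i 1)
    simpa [dotProduct, mulVec, Pi.single_apply] using this
  have htr0 : 0 ≤ Matrix.trace K := Finset.sum_nonneg fun i _ => hdiag i
  rcases htr0.lt_or_eq with h | h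
  · exact h
  · exfalso
    apply hKne
    have hdiag0 : ∀ i, K i i = 0 := by
      have := (Finset.sum_eq_zero_iff_of_nonneg (fun i _ => hdiag i)).mp h.symm
      exact fun i => this i (Finset.mem_univ i)
    ext i j
    simp only [Matrix.zero_apply]
    have hsym : K j i = K i j := by
      have h2 : Kᵀ = K := hK.1
      calc K j i = Kᵀ i j := rfl
        _ = K i j := by rw [h2]
    by_cases hij : i = j
    · subst hij; exact hdiag0 i
    have key : ∀ t : ℝ, 0 ≤ 2 * t * K i j := by
      intro t
      set x : Fin n → ℝ := fun k => (if k = i then 1 else 0) + t * (if k = j then 1 else 0)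
        with hxd
      have hquad := psd_quad_nonneg hK x
      have hKx : K *ᵥ x = fun k => K k i + t * K k j := by
        funext k
        simp only [mulVec, dotProduct, hxd, mul_add, mul_ite, mul_one, mul_zero,
          Finset.sum_add_distrib, Finset.sum_ite_eq', Finset.mem_univ, if_true]
        ring
      have hx : x ⬝ᵥ (K *ᵥ x) = K i i + t * K i j + t * K j i + t * t * K j j := by
        rw [hKx]
        simp only [dotProduct, hxd, add_mul, ite_mul, one_mul, zero_mul, mul_assoc,
          Finset.sum_add_distrib, Finset.sum_ite_eq', Finset.mem_univ, if_true,
          ← Finset.mul_sum]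
        ring
      rw [hx, hdiag0 i, hdiag0 j, hsym] at hquad
      nlinarith [hquad]
    have h1 := key (-(K i j))
    nlinarith [h1, sq_nonneg (K i j)]

/-- with `l = p zᵀ(K+nλI)⁻¹z`, `L = (p/(n²λ)) zᵀ(y yᵀ + nI)z`,
`D = (1/(n²λ)) Tr[(y yᵀ + nI)K] > 0` and `q = L/D`, one has `l ≤ D · q`. -/
theorem leverage_le_mass_mul_score {n : ℕ} (hn : 0 < n)
    (K : Matrix (Fin n) (Fin n) ℝ) (hK : K.PosSemidef) (hKne : K ≠ 0)
    (lam : ℝ) (hlam : 0 < lam) (y z : Fin n → ℝ) (p : ℝ) (hp : 0 ≤ p)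
    (l L D q : ℝ)
    (hl : l = p * (z ⬝ᵥ ((K + (↑n * lam) • (1 : Matrix (Fin n) (Fin n) ℝ))⁻¹ *ᵥ z)))
    (hL : L = (p / ((n : ℝ) ^ 2 * lam)) *
        (z ⬝ᵥ ((vecMulVec y y + (n : ℝ) • (1 : Matrix (Fin n) (Fin n) ℝ)) *ᵥ z)))
    (hD : D = (1 / ((n : ℝ) ^ 2 * lam)) *
        Matrix.trace ((vecMulVec y y + (n : ℝ) • (1 : Matrix (Fin n) (Fin n) ℝ)) * K))
    (hq : q = L / D) :
    0 < D ∧ l ≤ D * q := by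
  have hn' : (0 : ℝ) < n := by exact_mod_cast hn
  have hden : (0 : ℝ) < (n : ℝ) ^ 2 * lam := by positivity
  -- D > 0
  have htr1 : Matrix.trace (vecMulVec y y * K) = y ⬝ᵥ (K *ᵥ y) := by
    simp only [Matrix.trace, Matrix.diag, Matrix.mul_apply, vecMulVec_apply, dotProduct, mulVec]
    rw [Finset.sum_comm]
    apply Finset.sum_congr rfl
    intro j _
    rw [Finset.mul_sum]
    apply Finset.sum_congr rfl
    intro i _
    ring
  have hTr : Matrix.trace ((vecMulVec y y + (n : ℝ) • (1 : Matrix (Fin n) (Fin n) ℝ)) * K)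
      = y ⬝ᵥ (K *ᵥ y) + (n : ℝ) * Matrix.trace K := by
    rw [Matrix.add_mul, Matrix.trace_add, htr1, Matrix.smul_mul, Matrix.one_mul,
      Matrix.trace_smul]
    simp
  have hDpos : 0 < D := by
    rw [hD, hTr]
    have h1 : 0 ≤ y ⬝ᵥ (K *ᵥ y) := psd_quad_nonneg hK y
    have h2 : 0 < Matrix.trace K := psd_trace_pos hK hKne
    have h3 : 0 < y ⬝ᵥ (K *ᵥ y) + (n : ℝ) * Matrix.trace K := by positivity
    positivity
  refine ⟨hDpos, ?_⟩
  -- D * q = L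
  have hDq : D * q = L := by
    rw [hq, mul_comm, div_mul_cancel₀ _ hDpos.ne']
  rw [hDq]
  -- the matrix M
  set M : Matrix (Fin n) (Fin n) ℝ := K + (↑n * lam) • 1 with hMdef
  have h1pd : (((n : ℝ) * lam) • (1 : Matrix (Fin n) (Fin n) ℝ)).PosDef := by
    rw [smul_one_eq_diagonal]
    exact posDef_diagonal_iff.mpr fun i => by positivity
  have hMpd : M.PosDef := Matrix.PosDef.posSemidef_add hK h1pd
  set w : Fin n → ℝ := M⁻¹ *ᵥ z with hwdef
  have hzw : M *ᵥ w = z := by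
    rw [hwdef, mulVec_mulVec, Matrix.mul_nonsing_inv _ (isUnit_iff_ne_zero.mpr hMpd.det_pos.ne'),
      Matrix.one_mulVec]
  have hMw : M *ᵥ w = K *ᵥ w + ((n : ℝ) * lam) • w := by
    rw [hMdef, Matrix.add_mulVec, Matrix.smul_mulVec, Matrix.one_mulVec]
  set a : ℝ := w ⬝ᵥ (K *ᵥ w) with hadef
  set b : ℝ := (K *ᵥ w) ⬝ᵥ (K *ᵥ w) with hbdef
  set c : ℝ := w ⬝ᵥ w with hcdef
  have ha : 0 ≤ a := psd_quad_nonneg hK w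
  have hb : 0 ≤ b := Finset.sum_nonneg fun i _ => mul_self_nonneg _
  have hc : 0 ≤ c := Finset.sum_nonneg fun i _ => mul_self_nonneg _
  -- l in terms of a, c
  have hl2 : l = p * (a + (n : ℝ) * lam * c) := by
    rw [hl]
    have h5 : z ⬝ᵥ w = a + (n : ℝ) * lam * c := by
      conv_lhs => rw [← hzw]
      rw [hMw, add_dotProduct, smul_dotProduct, dotProduct_comm (K *ᵥ w) w, smul_eq_mul,
        hadef, hcdef]
    rw [h5]
  -- z ⬝ᵥ z
  have hzz : z ⬝ᵥ z = b + 2 * ((n : ℝ) * lam) * a + ((n : ℝ) * lam) ^ 2 * c := by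
    conv_lhs => rw [← hzw]
    rw [hMw]
    simp only [add_dotProduct, dotProduct_add, smul_dotProduct, dotProduct_smul, smul_eq_mul]
    rw [dotProduct_comm (K *ᵥ w) w, ← hadef, ← hbdef, ← hcdef]
    ring
  -- the yyᵀ quadratic form
  have hyz : z ⬝ᵥ (vecMulVec y y *ᵥ z) = (y ⬝ᵥ z) ^ 2 := by
    simp only [dotProduct, mulVec, vecMulVec_apply, dotProduct]
    rw [sq, Finset.sum_mul]
    apply Finset.sum_congr rfl
    intro i _
    rw [Finset.mul_sum, Finset.mul_sum]
    apply Finset.sum_congr rfl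
    intro j _
    ring
  have hL2 : L = p / ((n : ℝ) ^ 2 * lam) *
      ((y ⬝ᵥ z) ^ 2 + (n : ℝ) * (b + 2 * ((n : ℝ) * lam) * a + ((n : ℝ) * lam) ^ 2 * c)) := by
    rw [hL, Matrix.add_mulVec, dotProduct_add, hyz, Matrix.smul_mulVec,
      Matrix.one_mulVec, dotProduct_smul, smul_eq_mul, hzz]
  rw [hl2, hL2, div_mul_eq_mul_div, le_div_iff₀ hden]
  have hs : 0 ≤ (y ⬝ᵥ z) ^ 2 := sq_nonneg _
  nlinarith [mul_nonneg hp ha, mul_nonneg hp hb, mul_nonneg hp hc, mul_nonneg hp hs,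
    mul_nonneg (mul_nonneg hp ha) hden.le, mul_nonneg (mul_nonneg hp hb) hn'.le,
    mul_pos hn' hlam, mul_nonneg (mul_nonneg hp hc) (mul_pos hn' hlam).le]
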